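/- arXiv:math/0201273 — 3 statements merged into one kernel-verified Lean document; each statement's English description precedes it below -/
import Mathlib

section
/- Let ν be a probability measure on a measurable space Ω and let (u_n) be probability measures on Ω with Kullback–Leibler divergence D(u_n ‖ ν) → 0 as n → ∞. Let p : Ω → ℝ be measurable and suppose there exists δ > 0 such that ∫ exp(t·p(x)) ν(dx) < ∞ for all t with |t| < δ. Then p is integrable with respect to ν and with respect to u_n for all sufficiently large n, and ∫ p du_n → ∫ p dν as n → ∞. -/
open MeasureTheory ENNReal

open scoped Classical in
/-- The Kullback–Leibler divergence `D(μ‖ν) = ∫ log(dμ/dν) dμ`, equal to `+∞`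
if `μ` is not absolutely continuous with respect to `ν` (or if the
log-likelihood ratio is not integrable). -/
noncomputable def klDiv {Ω : Type*} [MeasurableSpace Ω] (μ ν : Measure Ω) : ℝ≥0∞ :=
  if μ ≪ ν ∧ Integrable (llr μ ν) μ then ENNReal.ofReal (∫ x, llr μ ν x ∂μ) else ⊤

/-- Young-type inequality: `a * b ≤ exp a - 1 + (b * log b - b + 1)`. -/
lemma young_aux (a : ℝ) {b : ℝ} (hb : 0 ≤ b) :
    a * b ≤ Real.exp a - 1 + (b * Real.log b - b + 1) := by
  rcases hb.eq_or_lt with h | h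
  · simp [← h]
    positivity
  · have h1 := Real.add_one_le_exp (a - Real.log b)
    rw [Real.exp_sub, Real.exp_log h] at h1
    have h2 := mul_le_mul_of_nonneg_right h1 hb
    rw [div_mul_cancel₀ _ h.ne'] at h2
    nlinarith

lemma abs_exp_sub_one_le (u : ℝ) : |Real.exp u - 1| ≤ |u| * Real.exp |u| := by
  rcases le_or_gt 0 u with h | h
  · rw [abs_of_nonneg (by linarith [Real.one_le_exp h]), abs_of_nonneg h]
    have h1 := Real.add_one_le_exp (-u)
    have h2 := mul_le_mul_of_nonneg_right h1 (Real.exp_pos u).le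
    rw [← Real.exp_add] at h2
    simp at h2
    nlinarith
  · have hu : Real.exp u < 1 := Real.exp_lt_one_iff.mpr h
    rw [abs_of_nonpos (by linarith), abs_of_neg h]
    have h1 := Real.add_one_le_exp u
    have h2 : (1:ℝ) ≤ Real.exp (-u) := Real.one_le_exp (by linarith)
    nlinarith

theorem integral_tendsto_of_klDiv_tendsto_zero {Ω : Type*} [MeasurableSpace Ω]
    (ν : Measure Ω) [IsProbabilityMeasure ν] (u : ℕ → Measure Ω)
    (hu : ∀ n, IsProbabilityMeasure (u n))
    (hkl : Filter.Tendsto (fun n => klDiv (u n) ν) Filter.atTop (nhds 0))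
    (p : Ω → ℝ) (hp : Measurable p)
    (hexp : ∃ δ > (0 : ℝ), ∀ t : ℝ, |t| < δ →
      Integrable (fun x => Real.exp (t * p x)) ν) :
    Integrable p ν ∧ (∀ᶠ n in Filter.atTop, Integrable p (u n)) ∧
      Filter.Tendsto (fun n => ∫ x, p x ∂(u n)) Filter.atTop (nhds (∫ x, p x ∂ν)) := by
  obtain ⟨δ, hδ, hexp⟩ := hexp
  set c : ℝ := δ / 2 with hc_def
  have hc : 0 < c := by positivity
  have hec : Integrable (fun x => Real.exp (c * p x)) ν := by
    refine hexp c ?_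
    rw [abs_of_pos hc]; linarith
  have hec' : Integrable (fun x => Real.exp (-c * p x)) ν := by
    refine hexp (-c) ?_
    rw [abs_neg, abs_of_pos hc]; linarith
  have hdom : Integrable (fun x => Real.exp (c * p x) + Real.exp (-c * p x)) ν := hec.add hec'
  -- basic pointwise bounds
  have habs : ∀ x, Real.exp (c * |p x|) ≤ Real.exp (c * p x) + Real.exp (-c * p x) := by
    intro x
    rcases abs_cases (p x) with ⟨h1, _⟩ | ⟨h1, _⟩
    · rw [h1]; linarith [(Real.exp_pos (-c * p x))]
    · rw [h1, mul_neg, ← neg_mul]; linarith [(Real.exp_pos (c * p x))]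
  have hyle : ∀ y : ℝ, y ≤ Real.exp y := fun y => by linarith [Real.add_one_le_exp y]
  have hple : ∀ x, |p x| ≤ c⁻¹ * (Real.exp (c * p x) + Real.exp (-c * p x)) := by
    intro x
    have h1 : c * |p x| ≤ Real.exp (c * |p x|) := hyle _
    have h2 := (h1.trans (habs x))
    calc |p x| = c⁻¹ * (c * |p x|) := by field_simp
    _ ≤ c⁻¹ * (Real.exp (c * p x) + Real.exp (-c * p x)) := by
        exact mul_le_mul_of_nonneg_left h2 (by positivity)
  -- Part 1
  have hpν : Integrable p ν := by
    refine (hdom.const_mul c⁻¹).mono' hp.aestronglyMeasurable (ae_of_all _ fun x => ?_)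
    rw [Real.norm_eq_abs]
    exact hple x
  -- main per-measure facts
  have main : ∀ n, u n ≪ ν → Integrable (llr (u n) ν) (u n) →
      Integrable p (u n) ∧ ∀ t : ℝ, |t| < δ →
        t * ∫ x, p x ∂(u n) ≤ (∫ x, Real.exp (t * p x) ∂ν) - 1 + ∫ x, llr (u n) ν x ∂(u n) := by
    intro n hac hllr
    haveI := hu n
    set g : Ω → ℝ := fun x => ((u n).rnDeriv ν x).toReal with hg_def
    have hgm : Measurable g := (Measure.measurable_rnDeriv _ _).ennreal_toReal
    have hgnn : ∀ x, 0 ≤ g x := fun x => ENNReal.toReal_nonneg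
    have hgint : Integrable g ν := Measure.integrable_toReal_rnDeriv
    have hgllr : Integrable (fun x => g x • llr (u n) ν x) ν :=
      (integrable_rnDeriv_smul_iff hac).mpr hllr
    have hgllr' : Integrable (fun x => g x * Real.log (g x)) ν := by
      refine hgllr.congr (ae_of_all _ fun x => ?_)
      simp [llr_def, smul_eq_mul, hg_def]
    have hsub2 : Integrable (fun x => g x * Real.log (g x) - g x) ν := hgllr'.sub hgint
    have hφ : Integrable (fun x => g x * Real.log (g x) - g x + 1) ν :=
      hsub2.add (integrable_const 1)
    -- integrability of p w.r.t. u n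
    have hpu : Integrable p (u n) := by
      rw [← integrable_rnDeriv_smul_iff hac]
      refine ((hdom.add hφ).const_mul c⁻¹).mono'
        ((hgm.smul hp).aestronglyMeasurable) (ae_of_all _ fun x => ?_)
      have hy := young_aux (c * |p x|) (hgnn x)
      have h2 : Real.exp (c * |p x|) - 1 ≤ Real.exp (c * p x) + Real.exp (-c * p x) := by
        linarith [habs x]
      have h3 : c * |p x| * g x ≤ (Real.exp (c * p x) + Real.exp (-c * p x)) +
          (g x * Real.log (g x) - g x + 1) := by linarith
      have h4 : ‖g x • p x‖ = |p x| * g x := by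
        rw [smul_eq_mul, Real.norm_eq_abs, abs_mul, abs_of_nonneg (hgnn x), mul_comm]
      rw [h4]
      simp only [Pi.add_apply]
      calc |p x| * g x = c⁻¹ * (c * |p x| * g x) := by field_simp
      _ ≤ _ := mul_le_mul_of_nonneg_left h3 (by positivity)
    refine ⟨hpu, fun t ht => ?_⟩
    have hTP : Integrable (fun x => t * p x) (u n) := hpu.const_mul t
    have hlhs_int : Integrable (fun x => g x • (t * p x)) ν :=
      (integrable_rnDeriv_smul_iff hac).mpr hTP
    have hsub1 : Integrable (fun x => Real.exp (t * p x) - 1) ν :=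
      (hexp t ht).sub (integrable_const 1)
    have hrhs_int : Integrable (fun x => (Real.exp (t * p x) - 1) +
        (g x * Real.log (g x) - g x + 1)) ν := hsub1.add hφ
    have hmono : ∫ x, g x • (t * p x) ∂ν ≤
        ∫ x, ((Real.exp (t * p x) - 1) + (g x * Real.log (g x) - g x + 1)) ∂ν := by
      refine integral_mono hlhs_int hrhs_int fun x => ?_
      have hy := young_aux (t * p x) (hgnn x)
      simp only [smul_eq_mul]
      nlinarith [hy]
    have hlhs : ∫ x, g x • (t * p x) ∂ν = t * ∫ x, p x ∂(u n) := by
      rw [integral_rnDeriv_smul hac, integral_const_mul]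
    have hgone : ∫ x, g x ∂ν = 1 := by
      rw [hg_def]
      rw [Measure.integral_toReal_rnDeriv hac]
      simp
    have hgl : ∫ x, g x * Real.log (g x) ∂ν = ∫ x, llr (u n) ν x ∂(u n) := by
      rw [← integral_rnDeriv_smul hac (f := llr (u n) ν)]
      refine integral_congr_ae (ae_of_all _ fun x => ?_)
      simp [llr_def, smul_eq_mul, hg_def]
    have hrhs : ∫ x, ((Real.exp (t * p x) - 1) + (g x * Real.log (g x) - g x + 1)) ∂ν =
        (∫ x, Real.exp (t * p x) ∂ν) - 1 + ∫ x, llr (u n) ν x ∂(u n) := by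
      have e1 : ∫ x, (Real.exp (t * p x) - 1) ∂ν = (∫ x, Real.exp (t * p x) ∂ν) - 1 := by
        rw [integral_sub (hexp t ht) (integrable_const 1)]
        simp
      have e2 : ∫ x, (g x * Real.log (g x) - g x + 1) ∂ν = ∫ x, llr (u n) ν x ∂(u n) := by
        rw [integral_add hsub2 (integrable_const 1),
          integral_sub hgllr' hgint, hgone, hgl]
        simp
      rw [integral_add hsub1 hφ, e1, e2]
    rw [← hlhs, hrhs.symm] at *
    linarith [hmono]
  -- eventual goodness
  have hfin : ∀ᶠ n in Filter.atTop, klDiv (u n) ν < ⊤ := by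
    have h01 : Set.Iio (1 : ℝ≥0∞) ∈ nhds (0 : ℝ≥0∞) := Iio_mem_nhds (by norm_num)
    exact (hkl.eventually h01).mono fun n hn => lt_of_lt_of_le hn le_top
  have hgood : ∀ᶠ n in Filter.atTop, u n ≪ ν ∧ Integrable (llr (u n) ν) (u n) := by
    refine hfin.mono fun n hn => ?_
    by_contra hcon
    simp only [klDiv, if_neg hcon] at hn
    exact lt_irrefl _ hn
  have hDnn : ∀ n, 0 ≤ (klDiv (u n) ν).toReal := fun n => ENNReal.toReal_nonneg
  have hLleD : ∀ n, u n ≪ ν → Integrable (llr (u n) ν) (u n) →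
      ∫ x, llr (u n) ν x ∂(u n) ≤ (klDiv (u n) ν).toReal := by
    intro n hac hllr
    rw [klDiv, if_pos ⟨hac, hllr⟩]
    rcases le_or_gt 0 (∫ x, llr (u n) ν x ∂(u n)) with h | h
    · rw [ENNReal.toReal_ofReal h]
    · exact h.le.trans ENNReal.toReal_nonneg
  have hDtend : Filter.Tendsto (fun n => (klDiv (u n) ν).toReal) Filter.atTop (nhds 0) := by
    have := (ENNReal.tendsto_toReal (by norm_num : (0:ℝ≥0∞) ≠ ⊤)).comp hkl
    exact this
  refine ⟨hpν, hgood.mono fun n hn => (main n hn.1 hn.2).1, ?_⟩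
  -- the derivative limit
  set I : ℝ := ∫ x, p x ∂ν with hI_def
  set c4 : ℝ := δ / 4 with hc4_def
  have hc4 : 0 < c4 := by positivity
  set ψ : ℝ → ℝ := fun s => ∫ x, (Real.exp (s * p x) - 1) / s ∂ν with hψ_def
  have hψ : Filter.Tendsto ψ (nhdsWithin 0 {(0:ℝ)}ᶜ) (nhds I) := by
    rw [hψ_def]
    refine tendsto_integral_filter_of_dominated_convergence
      (fun x => c4⁻¹ * (Real.exp (c * p x) + Real.exp (-c * p x)))
      (Filter.Eventually.of_forall fun t =>
        (((hp.const_mul t).exp.sub measurable_const).div_const t).aestronglyMeasurable)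
      ?_ (hdom.const_mul c4⁻¹) (ae_of_all _ fun x => ?_)
    · have hsmall : ∀ᶠ t : ℝ in nhdsWithin 0 {(0:ℝ)}ᶜ, |t| ≤ c4 := by
        refine Filter.Eventually.filter_mono nhdsWithin_le_nhds ?_
        have := eventually_abs_sub_lt (0:ℝ) hc4
        simpa using this.mono fun t ht => ht.le
      refine hsmall.mono fun t ht => ae_of_all _ fun x => ?_
      rcases eq_or_ne t 0 with rfl | ht0
      · simp; positivity
      have h1 : |Real.exp (t * p x) - 1| ≤ |t * p x| * Real.exp |t * p x| :=
        abs_exp_sub_one_le _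
      have h2 : |t * p x| ≤ c4 * |p x| := by
        rw [abs_mul]
        exact mul_le_mul_of_nonneg_right ht (abs_nonneg _)
      have h3 : Real.exp |t * p x| ≤ Real.exp (c4 * |p x|) :=
        Real.exp_le_exp.mpr (h2.trans_eq rfl)
      have h4 : |p x| ≤ c4⁻¹ * Real.exp (c4 * |p x|) := by
        have := hyle (c4 * |p x|)
        calc |p x| = c4⁻¹ * (c4 * |p x|) := by field_simp
        _ ≤ c4⁻¹ * Real.exp (c4 * |p x|) := mul_le_mul_of_nonneg_left this (by positivity)
      have h5 : Real.exp (c4 * |p x|) * Real.exp (c4 * |p x|) = Real.exp (c * |p x|) := by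
        rw [← Real.exp_add, hc4_def, hc_def]; ring_nf
      calc ‖(Real.exp (t * p x) - 1) / t‖ = |Real.exp (t * p x) - 1| / |t| := by
            rw [Real.norm_eq_abs, abs_div]
      _ ≤ (|t * p x| * Real.exp |t * p x|) / |t| := by
            gcongr
      _ = |p x| * Real.exp |t * p x| := by
            rw [abs_mul]
            field_simp
      _ ≤ (c4⁻¹ * Real.exp (c4 * |p x|)) * Real.exp (c4 * |p x|) :=
            mul_le_mul h4 h3 (Real.exp_pos _).le (by positivity)
      _ = c4⁻¹ * Real.exp (c * |p x|) := by rw [mul_assoc, h5]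
      _ ≤ c4⁻¹ * (Real.exp (c * p x) + Real.exp (-c * p x)) :=
            mul_le_mul_of_nonneg_left (habs x) (by positivity)
    · -- pointwise limit
      have hd : HasDerivAt (fun t : ℝ => Real.exp (t * p x)) (p x) 0 := by
        have h0 : HasDerivAt (fun t : ℝ => t * p x) (p x) 0 := hasDerivAt_mul_const (p x)
        have := h0.exp
        simpa using this
      rw [hasDerivAt_iff_tendsto_slope] at hd
      refine hd.congr fun t => ?_
      simp [slope_def_field]
  -- conclude
  rw [Metric.tendsto_atTop]
  intro ε hε
  have hev : ∀ᶠ t : ℝ in nhdsWithin 0 {(0:ℝ)}ᶜ, |ψ t - I| < ε / 2 :=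
    hψ.eventually (eventually_abs_sub_lt I (by positivity))
  rw [eventually_nhdsWithin_iff, Metric.eventually_nhds_iff] at hev
  obtain ⟨r, hr, hball⟩ := hev
  set t : ℝ := min (r / 2) (δ / 2) with ht_def
  have ht : 0 < t := lt_min (by positivity) (by positivity)
  have htr : t < r := lt_of_le_of_lt (min_le_left _ _) (by linarith)
  have htδ : t < δ := lt_of_le_of_lt (min_le_right _ _) (by linarith)
  have hmemt : ∀ s : ℝ, s = t ∨ s = -t → |ψ s - I| < ε / 2 := by
    intro s hs
    have hds : dist s 0 < r := by
      rcases hs with rfl | rfl <;> simp [Real.dist_eq, abs_of_pos ht, abs_of_neg (neg_neg_iff_pos.mpr ht)] <;> linarith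
    have hs0 : s ∈ ({(0:ℝ)}ᶜ : Set ℝ) := by
      rcases hs with rfl | rfl <;> simp [ht.ne', ht.ne]
    exact hball hds hs0
  have hψM : ∀ s : ℝ, s ≠ 0 → |s| < δ → s * ψ s = (∫ x, Real.exp (s * p x) ∂ν) - 1 := by
    intro s hs0 hsδ
    simp only [hψ_def, div_eq_mul_inv]
    rw [integral_mul_const, integral_sub (hexp s hsδ) (integrable_const 1)]
    simp only [integral_const, measure_univ, ENNReal.toReal_one, probReal_univ, smul_eq_mul, one_mul]
    field_simp
  have htabs : |t| < δ := by rw [abs_of_pos ht]; exact htδ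
  have htabs' : |(-t)| < δ := by rw [abs_neg]; exact htabs
  have hεD : ∀ᶠ n in Filter.atTop, (klDiv (u n) ν).toReal < t * (ε / 2) := by
    have hpos : (0:ℝ) < t * (ε / 2) := by positivity
    exact hDtend (Iio_mem_nhds hpos)
  obtain ⟨N, hN⟩ := (hgood.and hεD).exists_forall_of_atTop
  refine ⟨N, fun n hn => ?_⟩
  obtain ⟨⟨hac, hllr⟩, hD⟩ := hN n hn
  haveI := hu n
  obtain ⟨hpu, hkey⟩ := main n hac hllr
  set A : ℝ := ∫ x, p x ∂(u n) with hA_def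
  have hDle : ∫ x, llr (u n) ν x ∂(u n) ≤ (klDiv (u n) ν).toReal := hLleD n hac hllr
  have h1 : t * A ≤ t * ψ t + (klDiv (u n) ν).toReal := by
    have := hkey t htabs
    rw [hψM t ht.ne' htabs] at *
    linarith
  have h2 : (-t) * A ≤ (-t) * ψ (-t) + (klDiv (u n) ν).toReal := by
    have := hkey (-t) htabs'
    rw [hψM (-t) (neg_ne_zero.mpr ht.ne') htabs'] at *
    linarith
  have hψt := hmemt t (Or.inl rfl)
  have hψt' := hmemt (-t) (Or.inr rfl)
  have hup : A < I + ε := by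
    have : t * A < t * (ψ t + ε / 2) := by nlinarith
    have hA' : A < ψ t + ε / 2 := lt_of_mul_lt_mul_left this ht.le
    have : ψ t < I + ε / 2 := by
      have := abs_lt.mp hψt
      linarith [this.2]
    linarith
  have hlow : I - ε < A := by
    have h2' : t * (ψ (-t) - A) < t * (ε / 2) := by nlinarith
    have : ψ (-t) - A < ε / 2 := lt_of_mul_lt_mul_left h2' ht.le
    have : I - ε / 2 < ψ (-t) := by
      have := abs_lt.mp hψt'
      linarith [this.1]
    linarith
  rw [Real.dist_eq, abs_lt]
  constructor <;> linarith
end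

section
/- Let f : ℝ → ℝ satisfy: f(0) = 0; f is right-continuous at 0; f is differentiable on (0,∞) with f′(x) > 0 for all x > 0; there exist a₁ > 0 and a₂ > 0 with f′(x) ≥ a₁ for all x > a₂; and there exist q ∈ (1,2) and a₃ > 0 with liminf_{x→0⁺} f′(x)^q / f(x) ≥ a₃. Fix c > 0, set Z_c = ∫₀^∞ exp(−c f(x)) dx, and let X be a real random variable with density g(x) = exp(−c f(x))/Z_c on (0,∞) and 0 elsewhere. Then the random variable Y = f(X) satisfies E|Y − EY|³ < ∞. -/
open MeasureTheory Set Filter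

set_option maxHeartbeats 1000000 in
theorem third_moment_finite_of_gibbs
    {Ω : Type*} [MeasurableSpace Ω] (P : Measure Ω) [IsProbabilityMeasure P]
    (f : ℝ → ℝ) (hf0 : f 0 = 0) (hrc : ContinuousWithinAt f (Ici 0) 0)
    (hdiff : ∀ x > (0 : ℝ), DifferentiableAt ℝ f x)
    (hderiv : ∀ x > (0 : ℝ), 0 < deriv f x)
    (a₁ a₂ : ℝ) (ha₁ : 0 < a₁) (ha₂ : 0 < a₂)
    (htail : ∀ x > a₂, a₁ ≤ deriv f x)
    (q : ℝ) (hq1 : 1 < q) (hq2 : q < 2) (a₃ : ℝ) (ha₃ : 0 < a₃)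
    (hliminf : a₃ ≤ Filter.liminf (fun x => (deriv f x) ^ q / f x) (nhdsWithin 0 (Ioi 0)))
    (c : ℝ) (hc : 0 < c) (Z : ℝ) (hZ : Z = ∫ x in Ioi (0 : ℝ), Real.exp (-c * f x))
    (X : Ω → ℝ) (hX : Measurable X)
    (hlaw : Measure.map X P = volume.withDensity
      (fun x => ENNReal.ofReal (if 0 < x then Real.exp (-c * f x) / Z else 0))) :
    Integrable (fun ω => |f (X ω) - ∫ ω', f (X ω') ∂P| ^ 3) P := by
  set m : ℝ := ∫ ω', f (X ω') ∂P with hm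
  -- continuity of f on Ioi 0
  have hfc : ∀ x > (0:ℝ), ContinuousAt f x := fun x hx => (hdiff x hx).continuousAt
  -- f is strictly monotone on Ioi 0
  have hmono : StrictMonoOn f (Ioi 0) := by
    apply strictMonoOn_of_deriv_pos (convex_Ioi 0)
    · exact fun x hx => (hfc x hx).continuousWithinAt
    · simpa [interior_Ioi] using hderiv
  -- f tends to 0 from the right at 0
  have htend : Filter.Tendsto f (nhdsWithin 0 (Ioi 0)) (nhds 0) := by
    have h := hrc.tendsto
    rw [hf0] at h
    exact h.mono_left (nhdsWithin_mono 0 Ioi_subset_Ici_self)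
  -- f is nonnegative on Ioi 0
  have hfnn : ∀ x > (0:ℝ), 0 ≤ f x := by
    intro x hx
    refine le_of_tendsto htend ?_
    have hmem : Ioo (0:ℝ) x ∈ nhdsWithin 0 (Ioi 0) := by
      rw [← Ioi_inter_Iio]
      exact Filter.inter_mem self_mem_nhdsWithin
        (mem_nhdsWithin_of_mem_nhds (Iio_mem_nhds hx))
    filter_upwards [hmem] with y hy
    exact (hmono hy.1 hx hy.2).le
  -- linear growth beyond a₂
  have hgrow : ∀ x, a₂ ≤ x → a₁ * (x - a₂) ≤ f x - f a₂ := by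
    intro x hx
    have hcont : ContinuousOn f (Ici a₂) := fun y hy =>
      (hfc y (lt_of_lt_of_le ha₂ hy)).continuousWithinAt
    have hDiff : DifferentiableOn ℝ f (interior (Ici a₂)) := by
      rw [interior_Ici]
      exact fun y hy => (hdiff y (ha₂.trans hy)).differentiableWithinAt
    have hge : ∀ y ∈ interior (Ici a₂), a₁ ≤ deriv f y := by
      rw [interior_Ici]; exact fun y hy => htail y hy
    exact (convex_Ici a₂).mul_sub_le_image_sub_of_le_deriv hcont hDiff hge a₂
      self_mem_Ici x hx hx
  have hfa₂ : 0 ≤ f a₂ := hfnn a₂ ha₂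
  -- the continuous extension of f
  set F : ℝ → ℝ := fun x => if 0 < x then f x else 0 with hFdef
  have hFf : ∀ x > (0:ℝ), F x = f x := fun x hx => if_pos hx
  have hFcont : Continuous F := by
    rw [continuous_iff_continuousAt]
    intro x
    rcases lt_trichotomy x 0 with h | h | h
    · have hev : ∀ᶠ y in nhds x, (0:ℝ) = F y := by
        filter_upwards [Iio_mem_nhds h] with y hy
        have hy' : y < 0 := hy
        simp [hFdef, not_lt.2 hy'.le]
      exact continuousAt_const.congr hev
    · subst h
      have hF0 : F 0 = 0 := by simp [hFdef]
      have hle : Filter.Tendsto F (nhdsWithin (0:ℝ) (Iic 0)) (nhds 0) := by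
        refine Filter.Tendsto.congr' ?_ tendsto_const_nhds
        filter_upwards [self_mem_nhdsWithin] with y (hy : y ≤ 0)
        simp [hFdef, not_lt.2 hy]
      have hgt : Filter.Tendsto F (nhdsWithin (0:ℝ) (Ioi 0)) (nhds 0) := by
        refine Filter.Tendsto.congr' ?_ htend
        filter_upwards [self_mem_nhdsWithin] with y (hy : y ∈ Ioi 0)
        exact (if_pos hy).symm
      have := hle.sup hgt
      rw [nhdsLE_sup_nhdsGT] at this
      simpa [ContinuousAt, hF0] using this
    · have hev : ∀ᶠ y in nhds x, f y = F y := by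
        filter_upwards [Ioi_mem_nhds h] with y hy
        exact (if_pos hy).symm
      exact (hfc x h).congr hev
  -- basic measurability facts
  have hexpF_cont : Continuous (fun x => Real.exp (-c * F x)) :=
    Real.continuous_exp.comp ((continuous_const (y := -c)).mul hFcont)
  have hfle : ∀ x ∈ Ioc (0:ℝ) a₂, f x ≤ f a₂ := by
    intro x hx
    rcases eq_or_lt_of_le hx.2 with h | h
    · rw [h]
    · exact (hmono hx.1 ha₂ h).le
  -- integrability of the basic exponential density
  have hexp_int : IntegrableOn (fun x => Real.exp (-c * f x)) (Ioi (0:ℝ)) := by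
    have hasm : ∀ s : Set ℝ, MeasurableSet s → s ⊆ Ioi 0 →
        AEStronglyMeasurable (fun x => Real.exp (-c * f x)) (volume.restrict s) := by
      intro s hs hsub
      refine (hexpF_cont.aestronglyMeasurable.restrict).congr ?_
      filter_upwards [ae_restrict_mem hs] with x hx
      rw [hFf x (hsub hx)]
    have h1 : IntegrableOn (fun x => Real.exp (-c * f x)) (Ioc (0:ℝ) a₂) := by
      refine Integrable.mono' (integrable_const 1)
        (hasm _ measurableSet_Ioc Ioc_subset_Ioi_self) ?_
      filter_upwards [ae_restrict_mem measurableSet_Ioc] with x hx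
      rw [Real.norm_eq_abs, abs_of_pos (Real.exp_pos _), Real.exp_le_one_iff]
      have := hfnn x hx.1
      nlinarith
    have h2 : IntegrableOn (fun x => Real.exp (-c * f x)) (Ioi a₂) := by
      have hint : IntegrableOn (fun x => Real.exp (c * a₁ * a₂) * Real.exp (-(c * a₁) * x))
          (Ioi a₂) := (exp_neg_integrableOn_Ioi a₂ (by positivity)).const_mul _
      refine Integrable.mono' hint
        (hasm _ measurableSet_Ioi fun x hx => ha₂.trans hx) ?_
      filter_upwards [ae_restrict_mem measurableSet_Ioi] with x (hx : a₂ < x)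
      rw [Real.norm_eq_abs, abs_of_pos (Real.exp_pos _), ← Real.exp_add, Real.exp_le_exp]
      have h := hgrow x hx.le
      nlinarith
    have := h1.union h2
    rwa [Ioc_union_Ioi_eq_Ioi ha₂.le] at this
  have hZpos : 0 < Z := by
    have hlow : Real.exp (-c * f a₂) * (volume (Ioc (0:ℝ) a₂)).toReal ≤
        ∫ x in Ioc (0:ℝ) a₂, Real.exp (-c * f x) := by
      refine setIntegral_ge_of_const_le_real measurableSet_Ioc (by simp) ?_
        (hexp_int.mono_set Ioc_subset_Ioi_self)
      intro x hx
      rw [Real.exp_le_exp]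
      have := hfle x hx
      nlinarith
    have hmonoZ : ∫ x in Ioc (0:ℝ) a₂, Real.exp (-c * f x) ≤
        ∫ x in Ioi (0:ℝ), Real.exp (-c * f x) := by
      refine setIntegral_mono_set hexp_int ?_ (HasSubset.Subset.eventuallyLE Ioc_subset_Ioi_self)
      filter_upwards with x using (Real.exp_pos _).le
    have hvol : (volume (Ioc (0:ℝ) a₂)).toReal = a₂ := by
      rw [Real.volume_Ioc, ENNReal.toReal_ofReal (by linarith)]; ring
    rw [hZ]
    calc (0:ℝ) < Real.exp (-c * f a₂) * a₂ := by positivity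
      _ = Real.exp (-c * f a₂) * (volume (Ioc (0:ℝ) a₂)).toReal := by rw [hvol]
      _ ≤ ∫ x in Ioc (0:ℝ) a₂, Real.exp (-c * f x) := hlow
      _ ≤ _ := hmonoZ
  -- the density function
  set ρ : ℝ → ENNReal :=
    fun x => ENNReal.ofReal (if 0 < x then Real.exp (-c * f x) / Z else 0) with hρdef
  have hρmeas : Measurable ρ := by
    have : ρ = fun x => ENNReal.ofReal (if 0 < x then Real.exp (-c * F x) / Z else 0) := by
      funext x
      by_cases hx : 0 < x
      · simp only [hρdef, hx, if_pos, hFf x hx]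
      · simp [hρdef, hx]
    rw [this]
    exact ENNReal.measurable_ofReal.comp
      (Measurable.ite measurableSet_Ioi (hexpF_cont.measurable.div_const Z) measurable_const)
  -- a.e. positivity of X
  have haeX : ∀ᵐ ω ∂P, 0 < X ω := by
    have h0 : (Measure.map X P) (Iic (0:ℝ)) = 0 := by
      rw [hlaw, withDensity_apply _ measurableSet_Iic]
      refine lintegral_eq_zero_iff' (hρmeas.aemeasurable.restrict) |>.mpr ?_
      filter_upwards [ae_restrict_mem measurableSet_Iic] with x (hx : x ≤ 0)
      simp [hρdef, not_lt.2 hx]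
    have hmap := Measure.map_apply (μ := P) hX (measurableSet_Iic (a := (0:ℝ)))
    rw [h0] at hmap
    rw [ae_iff]
    have hset : {ω | ¬ 0 < X ω} = X ⁻¹' (Iic 0) := by
      ext ω; simp [not_lt]
    rw [hset]
    exact hmap.symm
  -- reduce to integrability with respect to the pushforward
  set G : ℝ → ℝ := fun x => |F x - m| ^ 3 with hGdef
  have hGcont : Continuous G := ((hFcont.sub continuous_const).abs).pow 3
  have hGnn : ∀ x, 0 ≤ G x := fun x => pow_nonneg (abs_nonneg _) 3
  have hGint : Integrable G (Measure.map X P) := by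
    rw [hlaw]
    rw [integrable_withDensity_iff hρmeas (by filter_upwards with x using ENNReal.ofReal_lt_top)]
    have hval : (fun x => G x * (ρ x).toReal) =
        (Ioi (0:ℝ)).indicator (fun x => G x * (Real.exp (-c * F x) / Z)) := by
      funext x
      by_cases hx : 0 < x
      · rw [indicator_of_mem (mem_Ioi.mpr hx)]
        simp only [hρdef, hx, if_pos]
        rw [ENNReal.toReal_ofReal (by positivity), hFf x hx]
      · rw [indicator_of_notMem (by simpa using hx)]
        simp [hρdef, hx]
    rw [hval, integrable_indicator_iff measurableSet_Ioi]
    have hASM : AEStronglyMeasurable (fun x => G x * (Real.exp (-c * F x) / Z)) volume :=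
      (hGcont.mul (hexpF_cont.div_const Z)).aestronglyMeasurable
    have h1 : IntegrableOn (fun x => G x * (Real.exp (-c * F x) / Z)) (Ioc (0:ℝ) a₂) := by
      refine Integrable.mono' (integrable_const ((f a₂ + |m|) ^ 3 / Z)) hASM.restrict ?_
      filter_upwards [ae_restrict_mem measurableSet_Ioc] with x hx
      have hFx : F x = f x := hFf x hx.1
      have h0x : 0 ≤ f x := hfnn x hx.1
      have hxa : f x ≤ f a₂ := hfle x hx
      rw [Real.norm_eq_abs, abs_of_nonneg (mul_nonneg (hGnn x) (by positivity))]
      have hG : G x ≤ (f a₂ + |m|) ^ 3 := by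
        rw [hGdef]
        simp only [hFx]
        refine pow_le_pow_left₀ (abs_nonneg _) ?_ 3
        calc |f x - m| ≤ |f x| + |m| := abs_sub _ _
          _ = f x + |m| := by rw [abs_of_nonneg h0x]
          _ ≤ f a₂ + |m| := by linarith
      have hexp : Real.exp (-c * F x) ≤ 1 := by
        rw [Real.exp_le_one_iff, hFx]; nlinarith
      have key : G x * Real.exp (-c * F x) ≤ (f a₂ + |m|) ^ 3 := by
        calc G x * Real.exp (-c * F x) ≤ (f a₂ + |m|) ^ 3 * 1 :=
              mul_le_mul hG hexp (Real.exp_pos _).le (by positivity)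
          _ = (f a₂ + |m|) ^ 3 := mul_one _
      calc G x * (Real.exp (-c * F x) / Z) = (G x * Real.exp (-c * F x)) / Z := by ring
        _ ≤ (f a₂ + |m|) ^ 3 / Z := by gcongr
    have h2 : IntegrableOn (fun x => G x * (Real.exp (-c * F x) / Z)) (Ioi a₂) := by
      set A : ℝ := (1728 / c ^ 3 + 8 * |m| ^ 3) / Z with hA
      have hAnn : 0 ≤ A := by positivity
      have hint : IntegrableOn
          (fun x => (A * Real.exp (c * a₁ * a₂ / 2)) * Real.exp (-(c * a₁ / 2) * x))
          (Ioi a₂) := (exp_neg_integrableOn_Ioi a₂ (by positivity)).const_mul _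
      refine Integrable.mono' hint hASM.restrict ?_
      filter_upwards [ae_restrict_mem measurableSet_Ioi] with x (hx : a₂ < x)
      have hFx : F x = f x := hFf x (ha₂.trans hx)
      have htnn : 0 ≤ f x := hfnn x (ha₂.trans hx)
      have hgt : a₁ * (x - a₂) ≤ f x := by have := hgrow x hx.le; linarith
      rw [Real.norm_eq_abs, abs_of_nonneg (mul_nonneg (hGnn x) (by positivity))]
      set t : ℝ := f x with ht
      rw [hGdef]
      simp only [hFx]
      -- |t - m|^3 ≤ 8*t^3 + 8*|m|^3
      have h1' : |t - m| ^ 3 ≤ 8 * t ^ 3 + 8 * |m| ^ 3 := by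
        have habs : |t - m| ≤ t + |m| := (abs_sub t m).trans (by rw [abs_of_nonneg htnn])
        have h2' : |t - m| ^ 3 ≤ (t + |m|) ^ 3 := pow_le_pow_left₀ (abs_nonneg _) habs 3
        nlinarith [abs_nonneg m, sq_nonneg (t - |m|), sq_nonneg (t + |m|)]
      -- t^3 ≤ (216/c^3) * exp(c*t/2)
      have hcube : t ^ 3 ≤ 216 / c ^ 3 * Real.exp (c * t / 2) := by
        have hu : c * t / 6 ≤ Real.exp (c * t / 6) := by
          have := Real.add_one_le_exp (c * t / 6); linarith
        have hu3 : (c * t / 6) ^ 3 ≤ Real.exp (c * t / 6) ^ 3 :=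
          pow_le_pow_left₀ (by positivity) hu 3
        have hexp3 : Real.exp (c * t / 6) ^ 3 = Real.exp (c * t / 2) := by
          rw [← Real.exp_nat_mul]
          norm_num
          ring_nf
        rw [hexp3] at hu3
        have h3 : (c * t / 6) ^ 3 = c ^ 3 * t ^ 3 / 216 := by ring
        rw [h3] at hu3
        rw [div_mul_eq_mul_div, le_div_iff₀ (by positivity)]
        nlinarith
      have hmulexp : Real.exp (c * t / 2) * Real.exp (-c * t) = Real.exp (-(c * t / 2)) := by
        rw [← Real.exp_add]; ring_nf
      have hA1 : t ^ 3 * Real.exp (-c * t) ≤ 216 / c ^ 3 * Real.exp (-(c * t / 2)) := by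
        calc t ^ 3 * Real.exp (-c * t)
            ≤ (216 / c ^ 3 * Real.exp (c * t / 2)) * Real.exp (-c * t) :=
              mul_le_mul_of_nonneg_right hcube (Real.exp_pos _).le
          _ = 216 / c ^ 3 * (Real.exp (c * t / 2) * Real.exp (-c * t)) := by ring
          _ = 216 / c ^ 3 * Real.exp (-(c * t / 2)) := by rw [hmulexp]
      have hexp_half : Real.exp (-c * t) ≤ Real.exp (-(c * t / 2)) := by
        rw [Real.exp_le_exp]; nlinarith
      have hkey : |t - m| ^ 3 * Real.exp (-c * t)
          ≤ (1728 / c ^ 3 + 8 * |m| ^ 3) * Real.exp (-(c * t / 2)) := by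
        calc |t - m| ^ 3 * Real.exp (-c * t)
            ≤ (8 * t ^ 3 + 8 * |m| ^ 3) * Real.exp (-c * t) :=
              mul_le_mul_of_nonneg_right h1' (Real.exp_pos _).le
          _ = 8 * (t ^ 3 * Real.exp (-c * t)) + 8 * |m| ^ 3 * Real.exp (-c * t) := by ring
          _ ≤ 8 * (216 / c ^ 3 * Real.exp (-(c * t / 2)))
              + 8 * |m| ^ 3 * Real.exp (-(c * t / 2)) := by
              have := mul_le_mul_of_nonneg_left hexp_half
                (show (0:ℝ) ≤ 8 * |m| ^ 3 by positivity)
              linarith [mul_le_mul_of_nonneg_left hA1 (show (0:ℝ) ≤ 8 by norm_num)]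
          _ = (1728 / c ^ 3 + 8 * |m| ^ 3) * Real.exp (-(c * t / 2)) := by ring
      have hexp2 : Real.exp (-(c * t / 2))
          ≤ Real.exp (c * a₁ * a₂ / 2) * Real.exp (-(c * a₁ / 2) * x) := by
        rw [← Real.exp_add, Real.exp_le_exp]
        nlinarith [mul_le_mul_of_nonneg_left hgt hc.le]
      calc |t - m| ^ 3 * (Real.exp (-c * t) / Z)
          = (|t - m| ^ 3 * Real.exp (-c * t)) / Z := by ring
        _ ≤ ((1728 / c ^ 3 + 8 * |m| ^ 3) * Real.exp (-(c * t / 2))) / Z := by gcongr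
        _ = A * Real.exp (-(c * t / 2)) := by rw [hA]; ring
        _ ≤ A * (Real.exp (c * a₁ * a₂ / 2) * Real.exp (-(c * a₁ / 2) * x)) :=
            mul_le_mul_of_nonneg_left hexp2 hAnn
        _ = (A * Real.exp (c * a₁ * a₂ / 2)) * Real.exp (-(c * a₁ / 2) * x) := by ring
    have := h1.union h2
    rwa [Ioc_union_Ioi_eq_Ioi ha₂.le] at this
  -- transfer back via the map
  have hcomp : Integrable (fun ω => G (X ω)) P :=
    (integrable_map_measure hGcont.aestronglyMeasurable hX.aemeasurable).mp hGint
  refine hcomp.congr ?_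
  filter_upwards [haeX] with ω hω
  rw [hGdef]
  simp only
  rw [hFf _ hω]
end

section
/- Let f : [0,∞) → ℝ satisfy: f(0) = 0; f is continuous; f is strictly increasing on (0,∞); and f(x) → ∞ as x → ∞. Suppose moreover that for every c > 0 both Z_c = ∫₀^∞ exp(−c f(x)) dx and ∫₀^∞ f(x) exp(−c f(x)) dx are finite. Then for every t ∈ (0,∞) there exists a unique c > 0 such that ∫₀^∞ f(x) exp(−c f(x)) dx = t · ∫₀^∞ exp(−c f(x)) dx, i.e., the mean energy ε(g_{1,c}) of the Gibbs density g_{1,c}(x) = exp(−c f(x))/Z_c equals t. -/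
open MeasureTheory Set Metric

private theorem gibbs_mul_exp_le (a y : ℝ) (ha : 0 < a) (hy : 0 ≤ y) :
    y * Real.exp (-a * y) ≤ 1/a := by
  rcases hy.eq_or_lt with h | h
  · simp [← h]; positivity
  · have hE : a * y ≤ Real.exp (a * y) := by nlinarith [Real.add_one_le_exp (a*y)]
    have h1 : Real.exp (-a * y) = (Real.exp (a * y))⁻¹ := by rw [neg_mul, Real.exp_neg]
    rw [h1]
    have h2 : (Real.exp (a*y))⁻¹ ≤ (a*y)⁻¹ := inv_anti₀ (by positivity) hE
    calc y * (Real.exp (a*y))⁻¹ ≤ y * (a*y)⁻¹ := mul_le_mul_of_nonneg_left h2 h.le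
      _ = 1/a := by field_simp

set_option maxHeartbeats 1000000 in
theorem exists_unique_gibbs_parameter
    (f : ℝ → ℝ) (hf0 : f 0 = 0) (hcont : ContinuousOn f (Ici 0))
    (hmono : StrictMonoOn f (Ioi 0))
    (htop : Filter.Tendsto f Filter.atTop Filter.atTop)
    (hZfin : ∀ c > (0 : ℝ), IntegrableOn (fun x => Real.exp (-c * f x)) (Ioi 0) volume)
    (hEfin : ∀ c > (0 : ℝ),
      IntegrableOn (fun x => f x * Real.exp (-c * f x)) (Ioi 0) volume) :
    ∀ t ∈ Ioi (0 : ℝ), ∃! c : ℝ, 0 < c ∧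
      (∫ x in Ioi (0 : ℝ), f x * Real.exp (-c * f x)) =
        t * ∫ x in Ioi (0 : ℝ), Real.exp (-c * f x) := by
  intro t ht
  rw [mem_Ioi] at ht
  -- positivity of f on (0, ∞)
  have hfpos : ∀ x : ℝ, 0 < x → 0 < f x := by
    intro x hx
    have h2 : (0:ℝ) < x/2 := by linarith
    have hlt : f (x/2) < f x := hmono (mem_Ioi.2 h2) (mem_Ioi.2 hx) (by linarith)
    have hnn : 0 ≤ f (x/2) := by
      by_contra hneg
      push_neg at hneg
      have hc0 : ContinuousWithinAt f (Ici 0) 0 := hcont 0 self_mem_Ici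
      have hev : ∀ᶠ y in nhdsWithin 0 (Ici (0:ℝ)), f y > f (x/2) := by
        have hT : Filter.Tendsto f (nhdsWithin 0 (Ici (0:ℝ))) (nhds 0) := by
          simpa [hf0] using hc0.tendsto
        exact hT.eventually (eventually_gt_nhds hneg)
      have hev2 : ∀ᶠ y in nhdsWithin (0:ℝ) (Ioi 0), f y > f (x/2) :=
        hev.filter_mono (nhdsWithin_mono _ Ioi_subset_Ici_self)
      have hev3 : ∀ᶠ y in nhdsWithin (0:ℝ) (Ioi 0), y < x/2 :=
        eventually_nhdsWithin_of_eventually_nhds (eventually_lt_nhds h2)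
      obtain ⟨y, hy1, hy2, hy3⟩ := (hev2.and (hev3.and self_mem_nhdsWithin)).exists
      exact absurd (hmono hy3 (mem_Ioi.2 h2) hy2) (by linarith [hy1])
    linarith
  -- measurability of f
  have hmf : AEStronglyMeasurable f (volume.restrict (Ioi 0)) :=
    ((hcont.aemeasurable measurableSet_Ici).mono_measure
      (Measure.restrict_mono Ioi_subset_Ici_self le_rfl)).aestronglyMeasurable
  -- lower bound on Z
  have hZlb : ∀ c > (0:ℝ), ∀ B > (0:ℝ),
      B * Real.exp (-c * f B) ≤ ∫ x in Ioi (0:ℝ), Real.exp (-c * f x) := by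
    intro c hc B hB
    have h1 : ∫ x in Ioc (0:ℝ) B, Real.exp (-c * f x) ≤
        ∫ x in Ioi (0:ℝ), Real.exp (-c * f x) := by
      refine setIntegral_mono_set (hZfin c hc) ?_ ?_
      · exact Filter.Eventually.of_forall fun x => (Real.exp_pos _).le
      · exact HasSubset.Subset.eventuallyLE Ioc_subset_Ioi_self
    refine le_trans ?_ h1
    have h2 : Real.exp (-c * f B) * (volume (Ioc (0:ℝ) B)).toReal ≤
        ∫ x in Ioc (0:ℝ) B, Real.exp (-c * f x) := by
      refine setIntegral_ge_of_const_le_real measurableSet_Ioc (by simp) ?_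
        ((hZfin c hc).mono_set Ioc_subset_Ioi_self)
      intro x hx
      have hfx : f x ≤ f B := by
        rcases eq_or_lt_of_le hx.2 with h | h
        · rw [h]
        · exact (hmono (mem_Ioi.2 hx.1) (mem_Ioi.2 (lt_trans hx.1 h)) h).le
      exact Real.exp_le_exp.2 (by nlinarith)
    calc B * Real.exp (-c * f B)
        = Real.exp (-c * f B) * (volume (Ioc (0:ℝ) B)).toReal := by
          rw [Real.volume_Ioc]; rw [ENNReal.toReal_ofReal (by linarith)]; ring
      _ ≤ _ := h2
  -- integrability of f^2 exp
  have hsq : ∀ c : ℝ, 0 < c →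
      IntegrableOn (fun x => f x ^ 2 * Real.exp (-c * f x)) (Ioi 0) volume := by
    intro c hc
    have hint : Integrable (fun x => (2/c) * (f x * Real.exp (-(c/2) * f x)))
        (volume.restrict (Ioi 0)) := (hEfin (c/2) (by positivity)).const_mul _
    refine hint.mono ((hmf.pow 2).mul (hZfin c hc).aestronglyMeasurable) ?_
    refine (ae_restrict_iff' measurableSet_Ioi).2 (Filter.Eventually.of_forall fun x hx => ?_)
    have hy := (hfpos x hx).le
    have h2 : Real.exp (-c * f x) = Real.exp (-(c/2) * f x) * Real.exp (-(c/2) * f x) := by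
      rw [← Real.exp_add]; ring_nf
    have h3 : f x * Real.exp (-(c/2) * f x) ≤ 2/c := by
      have := gibbs_mul_exp_le (c/2) (f x) (by positivity) hy
      calc f x * Real.exp (-(c/2) * f x) ≤ 1/(c/2) := this
        _ = 2/c := by field_simp
    rw [Real.norm_eq_abs, Real.norm_eq_abs, abs_of_nonneg (by positivity),
      abs_of_nonneg (by positivity)]
    calc f x ^ 2 * Real.exp (-c * f x)
        = (f x * Real.exp (-(c/2) * f x)) * (f x * Real.exp (-(c/2) * f x)) := by
          rw [h2]; ring
      _ ≤ (2/c) * (f x * Real.exp (-(c/2) * f x)) := by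
          have h4 : 0 ≤ f x * Real.exp (-(c/2) * f x) := by positivity
          gcongr
  -- the function h
  set h : ℝ → ℝ := fun c => ∫ x in Ioi (0:ℝ), (f x - t) * Real.exp (-c * f x) with hhdef
  have hfmt : ∀ c : ℝ, 0 < c →
      IntegrableOn (fun x => (f x - t) * Real.exp (-c * f x)) (Ioi 0) volume := by
    intro c hc
    have e1 : (fun x => (f x - t) * Real.exp (-c * f x)) =
        fun x => f x * Real.exp (-c * f x) - t * Real.exp (-c * f x) := by funext x; ring
    rw [e1]
    exact (hEfin c hc).sub ((hZfin c hc).const_mul t)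
  have hheq : ∀ c : ℝ, 0 < c → h c =
      (∫ x in Ioi (0:ℝ), f x * Real.exp (-c * f x)) -
        t * ∫ x in Ioi (0:ℝ), Real.exp (-c * f x) := by
    intro c hc
    rw [hhdef]
    have e1 : (fun x => (f x - t) * Real.exp (-c * f x)) =
        fun x => f x * Real.exp (-c * f x) - t * Real.exp (-c * f x) := by funext x; ring
    simp only [e1]
    rw [integral_sub (hEfin c hc) ((hZfin c hc).const_mul t), integral_const_mul]
  -- continuity of Z and E in c
  have hcontZ : ∀ c₀ : ℝ, 0 < c₀ →
      ContinuousAt (fun c => ∫ x in Ioi (0:ℝ), Real.exp (-c * f x)) c₀ := by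
    intro c₀ hc₀
    apply continuousAt_of_dominated (bound := fun x => Real.exp (-(c₀/2) * f x))
    · filter_upwards [eventually_gt_nhds hc₀] with c hc
      exact (hZfin c hc).aestronglyMeasurable
    · filter_upwards [eventually_gt_nhds (show c₀/2 < c₀ by linarith)] with c hc
      refine (ae_restrict_iff' measurableSet_Ioi).2 (Filter.Eventually.of_forall fun x hx => ?_)
      rw [Real.norm_eq_abs, Real.abs_exp]
      exact Real.exp_le_exp.2 (by nlinarith [(hfpos x hx).le])
    · exact hZfin (c₀/2) (by positivity)
    · refine Filter.Eventually.of_forall fun x => ?_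
      exact ((continuous_id.neg.mul continuous_const).rexp).continuousAt
  have hcontE : ∀ c₀ : ℝ, 0 < c₀ →
      ContinuousAt (fun c => ∫ x in Ioi (0:ℝ), f x * Real.exp (-c * f x)) c₀ := by
    intro c₀ hc₀
    apply continuousAt_of_dominated (bound := fun x => f x * Real.exp (-(c₀/2) * f x))
    · filter_upwards [eventually_gt_nhds hc₀] with c hc
      exact (hEfin c hc).aestronglyMeasurable
    · filter_upwards [eventually_gt_nhds (show c₀/2 < c₀ by linarith)] with c hc
      refine (ae_restrict_iff' measurableSet_Ioi).2 (Filter.Eventually.of_forall fun x hx => ?_)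
      have hy := (hfpos x hx).le
      rw [Real.norm_eq_abs, abs_mul, abs_of_nonneg hy, Real.abs_exp]
      exact mul_le_mul_of_nonneg_left (Real.exp_le_exp.2 (by nlinarith)) hy
    · exact hEfin (c₀/2) (by positivity)
    · refine Filter.Eventually.of_forall fun x => ?_
      exact (continuous_const.mul ((continuous_id.neg.mul continuous_const).rexp)).continuousAt
  have hconth : ∀ c : ℝ, 0 < c → ContinuousAt h c := by
    intro c hc
    have heq : (fun c => (∫ x in Ioi (0:ℝ), f x * Real.exp (-c * f x)) -
        t * ∫ x in Ioi (0:ℝ), Real.exp (-c * f x)) =ᶠ[nhds c] h :=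
      (eventually_gt_nhds hc).mono fun y hy => (hheq y hy).symm
    exact ContinuousAt.congr ((hcontE c hc).sub (continuousAt_const.mul (hcontZ c hc))) heq
  -- derivative of h at zeros is negative
  have hder : ∀ c : ℝ, 0 < c → h c = 0 → ∃ d : ℝ, d < 0 ∧ HasDerivAt h d c := by
    intro c₀ hc₀ hzero
    have hkey : Integrable (fun x => (f x - t) * (-(f x) * Real.exp (-c₀ * f x)))
          (volume.restrict (Ioi 0)) ∧
        HasDerivAt (fun c => ∫ x in Ioi (0:ℝ), (f x - t) * Real.exp (-c * f x))
          (∫ x in Ioi (0:ℝ), (f x - t) * (-(f x) * Real.exp (-c₀ * f x))) c₀ := by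
      apply hasDerivAt_integral_of_dominated_loc_of_deriv_le (s := ball c₀ (c₀/2)) (ball_mem_nhds _ (by positivity))
        (bound := fun x => (4/c₀ + t) * (f x * Real.exp (-(c₀/4) * f x)))
        (F' := fun c x => (f x - t) * (-(f x) * Real.exp (-c * f x)))
      · filter_upwards [eventually_gt_nhds hc₀] with c hc
        exact (hmf.sub aestronglyMeasurable_const).mul (hZfin c hc).aestronglyMeasurable
      · exact hfmt c₀ hc₀
      · exact (hmf.sub aestronglyMeasurable_const).mul
          (hmf.neg.mul (hZfin c₀ hc₀).aestronglyMeasurable)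
      · refine (ae_restrict_iff' measurableSet_Ioi).2
          (Filter.Eventually.of_forall fun x hx => ?_)
        intro c hc
        have hcge : c₀/2 ≤ c := by
          have := abs_lt.1 (mem_ball_iff_norm.1 hc)
          linarith [this.1]
        have hy := (hfpos x hx).le
        have h1 : Real.exp (-c * f x) ≤ Real.exp (-(c₀/2) * f x) :=
          Real.exp_le_exp.2 (by nlinarith)
        have h2 : Real.exp (-(c₀/2) * f x) =
            Real.exp (-(c₀/4) * f x) * Real.exp (-(c₀/4) * f x) := by
          rw [← Real.exp_add]; ring_nf
        have h3 : f x * Real.exp (-(c₀/4) * f x) ≤ 4/c₀ := by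
          have := gibbs_mul_exp_le (c₀/4) (f x) (by positivity) hy
          calc f x * Real.exp (-(c₀/4) * f x) ≤ 1/(c₀/4) := this
            _ = 4/c₀ := by field_simp
        rw [Real.norm_eq_abs, abs_mul, abs_mul, abs_neg, abs_of_nonneg hy, Real.abs_exp]
        have h4 : |f x - t| ≤ f x + t := by
          rw [abs_le]; constructor <;> nlinarith
        calc |f x - t| * (f x * Real.exp (-c * f x))
            ≤ (f x + t) * (f x * Real.exp (-(c₀/2) * f x)) := by
              apply mul_le_mul h4 (mul_le_mul_of_nonneg_left h1 hy)
                (by positivity) (by positivity)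
          _ = (f x * Real.exp (-(c₀/4) * f x)) * (f x * Real.exp (-(c₀/4) * f x))
                + t * (f x * Real.exp (-(c₀/2) * f x)) := by rw [h2]; ring
          _ ≤ (4/c₀) * (f x * Real.exp (-(c₀/4) * f x))
                + t * (f x * Real.exp (-(c₀/4) * f x)) := by
              have h5 : Real.exp (-(c₀/2) * f x) ≤ Real.exp (-(c₀/4) * f x) :=
                Real.exp_le_exp.2 (by nlinarith)
              have h6 : 0 ≤ f x * Real.exp (-(c₀/4) * f x) := by positivity
              gcongr
          _ = (4/c₀ + t) * (f x * Real.exp (-(c₀/4) * f x)) := by ring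
      · exact (hEfin (c₀/4) (by positivity)).const_mul _
      · refine (ae_restrict_iff' measurableSet_Ioi).2
          (Filter.Eventually.of_forall fun x hx => ?_)
        intro c hc
        have hd : HasDerivAt (fun c : ℝ => -c * f x) (-(f x)) c := by
          simpa using ((hasDerivAt_id c).neg.mul_const (f x))
        have := (hd.exp).const_mul (f x - t)
        convert this using 1
        rfl
        ring
    obtain ⟨hint, hD⟩ := hkey
    refine ⟨_, ?_, hD⟩
    -- the derivative equals -V where V > 0
    have hVint : IntegrableOn (fun x => (f x - t)^2 * Real.exp (-c₀ * f x)) (Ioi 0) volume := by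
      have e1 : (fun x => (f x - t)^2 * Real.exp (-c₀ * f x)) = fun x =>
          (f x ^ 2 * Real.exp (-c₀ * f x) - (2*t) * (f x * Real.exp (-c₀ * f x))) +
            t^2 * Real.exp (-c₀ * f x) := by funext x; ring
      rw [e1]
      exact ((hsq c₀ hc₀).sub ((hEfin c₀ hc₀).const_mul _)).add ((hZfin c₀ hc₀).const_mul _)
    have hVpos : 0 < ∫ x in Ioi (0:ℝ), (f x - t)^2 * Real.exp (-c₀ * f x) := by
      rw [setIntegral_pos_iff_support_of_nonneg_ae
        (Filter.Eventually.of_forall fun x => by positivity) hVint]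
      set S : Set ℝ := {x | 0 < x ∧ f x = t} with hS
      have hSsub : S.Subsingleton := by
        intro a ha b hb
        by_contra hne
        rcases lt_or_gt_of_ne hne with hab | hab
        · exact absurd (hmono (mem_Ioi.2 ha.1) (mem_Ioi.2 hb.1) hab)
            (by rw [ha.2, hb.2]; simp)
        · exact absurd (hmono (mem_Ioi.2 hb.1) (mem_Ioi.2 ha.1) hab)
            (by rw [ha.2, hb.2]; simp)
      have hsub : Ioi (0:ℝ) \ S ⊆
          Function.support (fun x => (f x - t)^2 * Real.exp (-c₀ * f x)) ∩ Ioi 0 := by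
        intro x hx
        refine ⟨?_, hx.1⟩
        have hft : f x ≠ t := fun he => hx.2 ⟨hx.1, he⟩
        simp only [Function.mem_support]
        have h0 : f x - t ≠ 0 := sub_ne_zero.mpr hft
        positivity
      calc (0:ENNReal) < volume (Ioi (0:ℝ) \ S) := by
            rw [measure_diff_null (hSsub.measure_zero volume)]
            simp
        _ ≤ _ := measure_mono hsub
    have hDeq : (∫ x in Ioi (0:ℝ), (f x - t) * (-(f x) * Real.exp (-c₀ * f x))) =
        -(∫ x in Ioi (0:ℝ), (f x - t)^2 * Real.exp (-c₀ * f x)) -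
          t * ∫ x in Ioi (0:ℝ), (f x - t) * Real.exp (-c₀ * f x) := by
      have e2 : (fun x => (f x - t) * (-(f x) * Real.exp (-c₀ * f x))) = fun x =>
          (-((f x - t)^2 * Real.exp (-c₀ * f x))) -
            t * ((f x - t) * Real.exp (-c₀ * f x)) := by funext x; ring
      simp only [e2]
      have hVn : Integrable (fun x => -((f x - t)^2 * Real.exp (-c₀ * f x)))
          (volume.restrict (Ioi 0)) := hVint.neg
      rw [integral_sub hVn ((hfmt c₀ hc₀).const_mul t), integral_neg, integral_const_mul]
    have hz : (∫ x in Ioi (0:ℝ), (f x - t) * Real.exp (-c₀ * f x)) = 0 := by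
      rw [hhdef] at hzero; exact hzero
    rw [hDeq, hz]
    linarith
  -- existence of c2 with h c2 < 0
  obtain ⟨c2, hc2pos, hc2neg⟩ : ∃ c2 > (0:ℝ),
      (∫ x in Ioi (0:ℝ), f x * Real.exp (-c2 * f x)) <
        t * ∫ x in Ioi (0:ℝ), Real.exp (-c2 * f x) := by
    obtain ⟨δ, hδpos, hδt⟩ : ∃ δ : ℝ, 0 < δ ∧ f δ < t := by
      have hc0 : Filter.Tendsto f (nhdsWithin 0 (Ici (0:ℝ))) (nhds 0) := by
        simpa [hf0] using (hcont 0 self_mem_Ici).tendsto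
      have hev : ∀ᶠ y in nhdsWithin (0:ℝ) (Ioi 0), f y < t :=
        (hc0.eventually (eventually_lt_nhds ht)).filter_mono
          (nhdsWithin_mono _ Ioi_subset_Ici_self)
      obtain ⟨y, hy1, hy2⟩ := (hev.and self_mem_nhdsWithin).exists
      exact ⟨y, hy2, hy1⟩
    set δ' := δ/2 with hδ'
    have hδ'pos : 0 < δ' := by positivity
    have hfδ : 0 < f δ := hfpos δ hδpos
    have hfδ' : 0 < f δ' := hfpos δ' hδ'pos
    have hflt : f δ' < f δ := hmono (mem_Ioi.2 hδ'pos) (mem_Ioi.2 hδpos) (by simp [hδ']; linarith)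
    set K := ∫ x in Ioi δ, f x * Real.exp (-1 * f x) with hK
    have hKnn : 0 ≤ K := setIntegral_nonneg measurableSet_Ioi fun x hx =>
      mul_nonneg (hfpos x (hδpos.trans hx)).le (Real.exp_pos _).le
    have htend : Filter.Tendsto
        (fun c => K * Real.exp (f δ) * Real.exp (-c * (f δ - f δ'))) Filter.atTop (nhds 0) := by
      have h1 : Filter.Tendsto (fun c : ℝ => c * (f δ - f δ')) Filter.atTop Filter.atTop :=
        Filter.Tendsto.atTop_mul_const (by linarith) Filter.tendsto_id
      have h2 : Filter.Tendsto (fun c : ℝ => Real.exp (-(c * (f δ - f δ'))))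
          Filter.atTop (nhds 0) := Real.tendsto_exp_neg_atTop_nhds_zero.comp h1
      have := h2.const_mul (K * Real.exp (f δ))
      simpa [mul_comm, mul_assoc, neg_mul] using this
    have hev2 : ∀ᶠ c in Filter.atTop,
        K * Real.exp (f δ) * Real.exp (-c * (f δ - f δ')) < (t - f δ) * δ' := by
      apply htend.eventually_lt_const
      exact mul_pos (by linarith) hδ'pos
    obtain ⟨c2, hc2b, hc2one⟩ := (hev2.and (Filter.eventually_ge_atTop (1:ℝ))).exists
    have hc2pos : (0:ℝ) < c2 := lt_of_lt_of_le one_pos hc2one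
    refine ⟨c2, hc2pos, ?_⟩
    set Z := ∫ x in Ioi (0:ℝ), Real.exp (-c2 * f x) with hZdef
    have hsplit : (∫ x in Ioi (0:ℝ), f x * Real.exp (-c2 * f x)) =
        (∫ x in Ioc (0:ℝ) δ, f x * Real.exp (-c2 * f x)) +
        ∫ x in Ioi δ, f x * Real.exp (-c2 * f x) := by
      rw [← setIntegral_union (Ioc_disjoint_Ioi le_rfl) measurableSet_Ioi
        ((hEfin c2 hc2pos).mono_set Ioc_subset_Ioi_self)
        ((hEfin c2 hc2pos).mono_set (Ioi_subset_Ioi hδpos.le)),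
        Ioc_union_Ioi_eq_Ioi hδpos.le]
    have hterm1 : (∫ x in Ioc (0:ℝ) δ, f x * Real.exp (-c2 * f x)) ≤ f δ * Z := by
      have h1 : (∫ x in Ioc (0:ℝ) δ, f x * Real.exp (-c2 * f x)) ≤
          ∫ x in Ioc (0:ℝ) δ, f δ * Real.exp (-c2 * f x) := by
        refine setIntegral_mono_on ((hEfin c2 hc2pos).mono_set Ioc_subset_Ioi_self)
          (((hZfin c2 hc2pos).mono_set Ioc_subset_Ioi_self).const_mul _) measurableSet_Ioc ?_
        intro x hx
        have hfx : f x ≤ f δ := by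
          rcases eq_or_lt_of_le hx.2 with h | h
          · rw [h]
          · exact (hmono (mem_Ioi.2 hx.1) (mem_Ioi.2 hδpos) h).le
        exact mul_le_mul_of_nonneg_right hfx (Real.exp_pos _).le
      rw [integral_const_mul] at h1
      refine h1.trans (mul_le_mul_of_nonneg_left ?_ hfδ.le)
      exact setIntegral_mono_set (hZfin c2 hc2pos)
        (Filter.Eventually.of_forall fun x => (Real.exp_pos _).le)
        (HasSubset.Subset.eventuallyLE Ioc_subset_Ioi_self)
    have hterm2 : (∫ x in Ioi δ, f x * Real.exp (-c2 * f x)) ≤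
        Real.exp (f δ) * Real.exp (-c2 * f δ) * K := by
      have h1 : (∫ x in Ioi δ, f x * Real.exp (-c2 * f x)) ≤
          ∫ x in Ioi δ, Real.exp (-(c2-1) * f δ) * (f x * Real.exp (-1 * f x)) := by
        refine setIntegral_mono_on ((hEfin c2 hc2pos).mono_set (Ioi_subset_Ioi hδpos.le))
          (((hEfin 1 one_pos).mono_set (Ioi_subset_Ioi hδpos.le)).const_mul _)
          measurableSet_Ioi ?_
        intro x hx
        have hfx : f δ ≤ f x := (hmono (mem_Ioi.2 hδpos) (mem_Ioi.2 (hδpos.trans hx)) hx).le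
        have hfxpos : 0 < f x := hfpos x (hδpos.trans hx)
        have heq2 : f x * Real.exp (-c2 * f x) =
            Real.exp (-(c2-1) * f x) * (f x * Real.exp (-1 * f x)) := by
          rw [mul_comm (Real.exp _), mul_assoc, ← Real.exp_add]; ring_nf
        rw [heq2]
        exact mul_le_mul_of_nonneg_right
          (Real.exp_le_exp.2 (by nlinarith)) (by positivity)
      rw [integral_const_mul] at h1
      refine h1.trans (le_of_eq ?_)
      rw [← hK, ← Real.exp_add]
      ring_nf
    have hZlb' : δ' * Real.exp (-c2 * f δ') ≤ Z := hZlb c2 hc2pos δ' hδ'pos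
    have hkey2 : Real.exp (f δ) * Real.exp (-c2 * f δ) * K < (t - f δ) * Z := by
      have h1 : K * Real.exp (f δ) * Real.exp (-c2 * (f δ - f δ')) * Real.exp (-c2 * f δ') <
          (t - f δ) * δ' * Real.exp (-c2 * f δ') :=
        mul_lt_mul_of_pos_right hc2b (Real.exp_pos _)
      have h2 : K * Real.exp (f δ) * Real.exp (-c2 * (f δ - f δ')) * Real.exp (-c2 * f δ')
          = Real.exp (f δ) * Real.exp (-c2 * f δ) * K := by
        rw [mul_assoc, ← Real.exp_add]; ring_nf
      rw [h2] at h1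
      refine h1.trans_le ?_
      rw [mul_assoc]
      exact mul_le_mul_of_nonneg_left hZlb' (by linarith)
    rw [hsplit]
    have hZnn : 0 ≤ Z := setIntegral_nonneg measurableSet_Ioi fun x hx => (Real.exp_pos _).le
    nlinarith [hterm1, hterm2, hkey2]
  -- existence of c1 < c2 with h c1 > 0
  obtain ⟨c1, hc1pos, hc1lt, hc1gt⟩ : ∃ c1 : ℝ, 0 < c1 ∧ c1 < c2 ∧
      t * (∫ x in Ioi (0:ℝ), Real.exp (-c1 * f x)) <
        ∫ x in Ioi (0:ℝ), f x * Real.exp (-c1 * f x) := by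
    obtain ⟨A, hA1, hA2⟩ := ((htop.eventually_ge_atTop (2*t)).and
      (Filter.eventually_ge_atTop (1:ℝ))).exists
    have hApos : (0:ℝ) < A := lt_of_lt_of_le one_pos hA2
    set B := 3 * A with hB
    have hBpos : 0 < B := by positivity
    have hfB : 0 < f B := hfpos B hBpos
    set c1 := min (Real.log (3/2) / (2 * f B)) (c2/2) with hc1def
    have hlog : 0 < Real.log (3/2) := Real.log_pos (by norm_num)
    have hc1pos : 0 < c1 := lt_min (by positivity) (by positivity)
    have hc1lt : c1 < c2 := (min_le_right _ _).trans_lt (by linarith)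
    refine ⟨c1, hc1pos, hc1lt, ?_⟩
    set Z := ∫ x in Ioi (0:ℝ), Real.exp (-c1 * f x) with hZdef
    have hexp : (2/3 : ℝ) < Real.exp (-c1 * f B) := by
      have h1 : c1 * f B < Real.log (3/2) := by
        have hm : c1 ≤ Real.log (3/2) / (2 * f B) := min_le_left _ _
        have h2 : c1 * f B ≤ Real.log (3/2) / 2 := by
          rw [div_mul_eq_div_div] at hm
          calc c1 * f B ≤ (Real.log (3/2) / 2 / f B) * f B := by gcongr
            _ = Real.log (3/2) / 2 := by field_simp
        linarith
      have h2 : Real.log (2/3 : ℝ) < -c1 * f B := by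
        rw [show (2/3:ℝ) = (3/2:ℝ)⁻¹ by norm_num, Real.log_inv]
        linarith
      calc (2/3:ℝ) = Real.exp (Real.log (2/3)) := by rw [Real.exp_log]; norm_num
        _ < Real.exp (-c1 * f B) := Real.exp_lt_exp.2 h2
    have hZgt : 2 * A < Z := by
      calc 2 * A = B * (2/3) := by rw [hB]; ring
        _ < B * Real.exp (-c1 * f B) := mul_lt_mul_of_pos_left hexp hBpos
        _ ≤ Z := hZlb c1 hc1pos B hBpos
    have hIoc : (∫ x in Ioc (0:ℝ) A, Real.exp (-c1 * f x)) ≤ A := by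
      have h1 : (∫ x in Ioc (0:ℝ) A, Real.exp (-c1 * f x)) ≤ ∫ _x in Ioc (0:ℝ) A, (1:ℝ) := by
        refine setIntegral_mono_on ((hZfin c1 hc1pos).mono_set Ioc_subset_Ioi_self)
          (integrableOn_const (by simp)) measurableSet_Ioc ?_
        intro x hx
        rw [Real.exp_le_one_iff]
        nlinarith [hfpos x hx.1]
      calc (∫ x in Ioc (0:ℝ) A, Real.exp (-c1 * f x)) ≤ ∫ _x in Ioc (0:ℝ) A, (1:ℝ) := h1
        _ = A := by
            rw [setIntegral_const, smul_eq_mul, mul_one, measureReal_def, Real.volume_Ioc, sub_zero,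
              ENNReal.toReal_ofReal hApos.le]
    have hsplitZ : Z = (∫ x in Ioc (0:ℝ) A, Real.exp (-c1 * f x)) +
        ∫ x in Ioi A, Real.exp (-c1 * f x) := by
      rw [hZdef, ← setIntegral_union (Ioc_disjoint_Ioi le_rfl) measurableSet_Ioi
        ((hZfin c1 hc1pos).mono_set Ioc_subset_Ioi_self)
        ((hZfin c1 hc1pos).mono_set (Ioi_subset_Ioi hApos.le)),
        Ioc_union_Ioi_eq_Ioi hApos.le]
    have hE1 : (∫ x in Ioi A, f x * Real.exp (-c1 * f x)) ≤
        ∫ x in Ioi (0:ℝ), f x * Real.exp (-c1 * f x) :=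
      setIntegral_mono_set (hEfin c1 hc1pos)
        ((ae_restrict_iff' measurableSet_Ioi).2 (Filter.Eventually.of_forall fun x hx =>
          mul_nonneg (hfpos x hx).le (Real.exp_pos _).le))
        (HasSubset.Subset.eventuallyLE (Ioi_subset_Ioi hApos.le))
    have hE2 : f A * ∫ x in Ioi A, Real.exp (-c1 * f x) ≤
        ∫ x in Ioi A, f x * Real.exp (-c1 * f x) := by
      rw [← integral_const_mul]
      refine setIntegral_mono_on (((hZfin c1 hc1pos).mono_set
        (Ioi_subset_Ioi hApos.le)).const_mul _)
        ((hEfin c1 hc1pos).mono_set (Ioi_subset_Ioi hApos.le)) measurableSet_Ioi ?_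
      intro x hx
      exact mul_le_mul_of_nonneg_right
        (hmono (mem_Ioi.2 hApos) (mem_Ioi.2 (hApos.trans hx)) hx).le (Real.exp_pos _).le
    have hfA : 2 * t ≤ f A := hA1
    have hIoiA : Z - A ≤ ∫ x in Ioi A, Real.exp (-c1 * f x) := by
      rw [hsplitZ]; linarith
    have hZA : 0 < Z - 2*A := by linarith
    calc t * Z < f A * (Z - A) := by nlinarith
      _ ≤ f A * ∫ x in Ioi A, Real.exp (-c1 * f x) :=
          mul_le_mul_of_nonneg_left hIoiA (by linarith)
      _ ≤ ∫ x in Ioi A, f x * Real.exp (-c1 * f x) := hE2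
      _ ≤ _ := hE1
  -- the sign of h at c1, c2
  have hhc1 : 0 < h c1 := by rw [hheq c1 hc1pos]; linarith
  have hhc2 : h c2 < 0 := by rw [hheq c2 hc2pos]; linarith
  -- existence of a zero via IVT
  have hcontIcc : ContinuousOn h (Icc c1 c2) := fun y hy =>
    (hconth y (lt_of_lt_of_le hc1pos hy.1)).continuousWithinAt
  obtain ⟨c₀, hc₀mem, hc₀z⟩ := intermediate_value_Icc' hc1lt.le hcontIcc
    (show (0:ℝ) ∈ Icc (h c2) (h c1) from ⟨hhc2.le, hhc1.le⟩)
  have hc₀pos : 0 < c₀ := lt_of_lt_of_le hc1pos hc₀mem.1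
  -- uniqueness : no two zeros
  have hfalse : ∀ a b : ℝ, 0 < a → 0 < b → h a = 0 → h b = 0 → a < b → False := by
    intro c c' hc hc' hz hz' hlt
    have hright : ∀ b : ℝ, 0 < b → h b = 0 → ∀ᶠ y in nhdsWithin b (Ioi b), h y < 0 := by
      intro b hb hzb
      obtain ⟨d, hd, hdb⟩ := hder b hb hzb
      have hsl : Filter.Tendsto (slope h b) (nhdsWithin b {b}ᶜ) (nhds d) :=
        hasDerivAt_iff_tendsto_slope.1 hdb
      have hev : ∀ᶠ y in nhdsWithin b {b}ᶜ, slope h b y < 0 := hsl.eventually_lt_const hd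
      have hev2 : ∀ᶠ y in nhdsWithin b (Ioi b), slope h b y < 0 :=
        hev.filter_mono (nhdsWithin_mono _ fun y hy => ne_of_gt hy)
      filter_upwards [hev2, self_mem_nhdsWithin] with y hy hyb
      rw [slope_def_field, hzb] at hy
      have h1 : 0 < y - b := sub_pos.2 hyb
      rw [div_neg_iff] at hy
      rcases hy with ⟨h2, h3⟩ | ⟨h2, h3⟩
      · linarith
      · linarith
    have hleft : ∀ b : ℝ, 0 < b → h b = 0 → ∀ᶠ y in nhdsWithin b (Iio b), 0 < h y := by
      intro b hb hzb
      obtain ⟨d, hd, hdb⟩ := hder b hb hzb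
      have hsl : Filter.Tendsto (slope h b) (nhdsWithin b {b}ᶜ) (nhds d) :=
        hasDerivAt_iff_tendsto_slope.1 hdb
      have hev : ∀ᶠ y in nhdsWithin b {b}ᶜ, slope h b y < 0 := hsl.eventually_lt_const hd
      have hev2 : ∀ᶠ y in nhdsWithin b (Iio b), slope h b y < 0 :=
        hev.filter_mono (nhdsWithin_mono _ fun y hy => ne_of_lt hy)
      filter_upwards [hev2, self_mem_nhdsWithin] with y hy hyb
      rw [slope_def_field, hzb] at hy
      have h1 : y - b < 0 := sub_neg.2 hyb
      rw [div_neg_iff] at hy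
      rcases hy with ⟨h2, h3⟩ | ⟨h2, h3⟩
      · linarith
      · linarith
    have hIoo : ∀ᶠ y in nhdsWithin c (Ioi c), y ∈ Ioo c c' :=
      Filter.eventually_of_mem (Ioo_mem_nhdsGT_of_mem ⟨le_refl c, hlt⟩) fun y hy => hy
    obtain ⟨a, haneg, haIoo⟩ := ((hright c hc hz).and hIoo).exists
    have hIoo' : ∀ᶠ y in nhdsWithin c' (Iio c'), y ∈ Ioo a c' :=
      Filter.eventually_of_mem (Ioo_mem_nhdsLT_of_mem ⟨haIoo.2, le_refl c'⟩) fun y hy => hy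
    obtain ⟨b, hbpos, hbIoo⟩ := ((hleft c' hc' hz').and hIoo').exists
    have hab : a < b := hbIoo.1
    have hapos : 0 < a := hc.trans haIoo.1
    have hconth2 : ContinuousOn h (Icc a b) := fun y hy =>
      (hconth y (hapos.trans_le hy.1)).continuousWithinAt
    set S : Set ℝ := {y ∈ Icc a b | h y = 0} with hSdef
    have hSne : S.Nonempty := by
      obtain ⟨z, hzm, hz0⟩ := intermediate_value_Icc hab.le hconth2
        (show (0:ℝ) ∈ Icc (h a) (h b) from ⟨haneg.le, hbpos.le⟩)
      exact ⟨z, hzm, hz0⟩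
    have hSbdd : BddBelow S := ⟨a, fun y hy => hy.1.1⟩
    have hSclosed : IsClosed S := by
      have h2 : S = Icc a b ∩ h ⁻¹' {0} := by
        ext y; simp [hSdef]
      rw [h2]
      exact hconth2.preimage_isClosed_of_isClosed isClosed_Icc isClosed_singleton
    set c₃ := sInf S with hc₃def
    have hc₃S : c₃ ∈ S := hSclosed.csInf_mem hSne hSbdd
    have hc₃z : h c₃ = 0 := hc₃S.2
    have hc₃ab : c₃ ∈ Icc a b := hc₃S.1
    have hac₃ : a < c₃ := by
      rcases eq_or_lt_of_le hc₃ab.1 with e | e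
      · exact absurd (e ▸ hc₃z) (ne_of_lt haneg)
      · exact e
    have hc₃pos : 0 < c₃ := hapos.trans hac₃
    have hneg2 : ∀ y ∈ Ico a c₃, h y < 0 := by
      intro y hy
      rcases lt_trichotomy (h y) 0 with hy0 | hy0 | hy0
      · exact hy0
      · exact absurd (csInf_le hSbdd ⟨⟨hy.1, hy.2.le.trans hc₃ab.2⟩, hy0⟩) (not_le.2 hy.2)
      · exfalso
        have hsub : Icc a y ⊆ Icc a b := Icc_subset_Icc le_rfl (hy.2.le.trans hc₃ab.2)
        obtain ⟨z, hzm, hz0⟩ := intermediate_value_Icc hy.1 (hconth2.mono hsub)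
          (show (0:ℝ) ∈ Icc (h a) (h y) from ⟨haneg.le, hy0.le⟩)
        have hz1 : c₃ ≤ z := csInf_le hSbdd ⟨hsub hzm, hz0⟩
        have hz2 : z ≤ y := hzm.2
        linarith [hy.2]
    have hIoo'' : ∀ᶠ y in nhdsWithin c₃ (Iio c₃), y ∈ Ioo a c₃ :=
      Filter.eventually_of_mem (Ioo_mem_nhdsLT_of_mem ⟨hac₃, le_refl c₃⟩) fun y hy => hy
    obtain ⟨y, hy1, hy2⟩ := ((hleft c₃ hc₃pos hc₃z).and hIoo'').exists
    exact absurd hy1 (not_lt.2 (hneg2 y ⟨hy2.1.le, hy2.2⟩).le)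
  -- conclusion
  refine ⟨c₀, ⟨hc₀pos, ?_⟩, ?_⟩
  · have h1 := hheq c₀ hc₀pos
    rw [hc₀z] at h1
    linarith
  · rintro y ⟨hypos, hyeq⟩
    have hyz : h y = 0 := by rw [hheq y hypos, hyeq]; ring
    by_contra hne
    rcases lt_or_gt_of_ne hne with hlt | hlt
    · exact hfalse y c₀ hypos hc₀pos hyz hc₀z hlt
    · exact hfalse c₀ y hc₀pos hypos hc₀z hyz hlt
end
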